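/- Consider the deterministic two-cycle Markov chain on S = {1,...,d} in which state d transitions with probability 1/2 to state 1 (long cycle) and with probability 1/2 to state d-q (short cycle, where 1 ≤ q < d-2), every other state x transitions deterministically to x+1, and emissions are deterministic: states 1 and d emit Z = 1 and all other states emit Z = 0. Then the nonlinear filter π_t(·) = P(X_t = · | Z_{1:t}), initialized at a point mass on any state, is at every time t either a point mass on a single state or the uniform mixture (1/2)(δ_1 + δ_{d-q}), and the latter occurs exactly at time steps immediately following a visit to state d. -/

import Mathlib

open Finset

/-- Transition matrix of the two-cycle chain on states `{1,…,d}` (represented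
as `Fin d`, with state `k` ↔ index `k-1`): state `d` branches with probability
`1/2` to state `1` and to state `d-q`; every other state moves to its successor. -/
noncomputable def twoCycleA (d q : ℕ) (x y : Fin d) : ℝ :=
  if (x : ℕ) = d - 1 then (if (y : ℕ) = 0 ∨ (y : ℕ) = d - q - 1 then 1 / 2 else 0)
  else if (y : ℕ) = (x : ℕ) + 1 then 1 else 0

/-- Deterministic emissions: states `1` and `d` emit `1`, all others emit `0`. -/
def twoCycleC (d : ℕ) (x : Fin d) (z : Fin 2) : ℝ :=
  if (x : ℕ) = 0 ∨ (x : ℕ) = d - 1 then (if z = 1 then 1 else 0)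
  else (if z = 0 then 1 else 0)

/-- Point mass at `x`. -/
def pointMass (d : ℕ) (x : Fin d) : Fin d → ℝ := fun y => if y = x then 1 else 0

/-- The uniform mixture `(1/2)(δ_1 + δ_{d-q})`. -/
noncomputable def branchMixture (d q : ℕ) : Fin d → ℝ :=
  fun y => if (y : ℕ) = 0 ∨ (y : ℕ) = d - q - 1 then 1 / 2 else 0

-- sum against a point mass
lemma pm_sum (d : ℕ) (x0 : Fin d) (f : Fin d → ℝ) :
    ∑ x, pointMass d x0 x * f x = f x0 := by
  simp [pointMass, ite_mul]

lemma step_point (d q : ℕ) (hq1 : 1 ≤ q) (hq2 : q < d - 2)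
    (p p' : Fin d → ℝ) (z : Fin 2) (x0 : Fin d)
    (hp : p = pointMass d x0)
    (hpos : 0 < ∑ x, p x * twoCycleC d x z)
    (hrec : ∀ x', p' x' = (∑ x, p x * twoCycleC d x z * twoCycleA d q x x') /
      ∑ x, p x * twoCycleC d x z) :
    ∀ x', p' x' = twoCycleA d q x0 x' := by
  subst hp
  have hden : ∑ x, pointMass d x0 x * twoCycleC d x z = twoCycleC d x0 z := pm_sum ..
  rw [hden] at hpos
  have hC : twoCycleC d x0 z = 1 := by
    unfold twoCycleC at hpos ⊢
    split_ifs at hpos ⊢ <;> simp_all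
  intro x'
  rw [hrec x', hden, hC]
  have : ∑ x, pointMass d x0 x * twoCycleC d x z * twoCycleA d q x x'
      = twoCycleC d x0 z * twoCycleA d q x0 x' := by
    simp [pointMass, ite_mul]
  rw [this, hC]
  ring

lemma step_point_mid (d q : ℕ) (hq1 : 1 ≤ q) (hq2 : q < d - 2)
    (p p' : Fin d → ℝ) (z : Fin 2) (x0 : Fin d) (hx0 : (x0 : ℕ) ≠ d - 1)
    (hp : p = pointMass d x0)
    (hpos : 0 < ∑ x, p x * twoCycleC d x z)
    (hrec : ∀ x', p' x' = (∑ x, p x * twoCycleC d x z * twoCycleA d q x x') /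
      ∑ x, p x * twoCycleC d x z) :
    p' = pointMass d ⟨(x0 : ℕ) + 1, by omega⟩ := by
  funext x'
  rw [step_point d q hq1 hq2 p p' z x0 hp hpos hrec x']
  simp [twoCycleA, pointMass, Fin.ext_iff, hx0]

lemma step_point_end (d q : ℕ) (hq1 : 1 ≤ q) (hq2 : q < d - 2)
    (p p' : Fin d → ℝ) (z : Fin 2) (x0 : Fin d) (hx0 : (x0 : ℕ) = d - 1)
    (hp : p = pointMass d x0)
    (hpos : 0 < ∑ x, p x * twoCycleC d x z)
    (hrec : ∀ x', p' x' = (∑ x, p x * twoCycleC d x z * twoCycleA d q x x') /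
      ∑ x, p x * twoCycleC d x z) :
    p' = branchMixture d q := by
  funext x'
  rw [step_point d q hq1 hq2 p p' z x0 hp hpos hrec x']
  simp [twoCycleA, branchMixture, hx0]

lemma bm_expand (d q : ℕ) (hq1 : 1 ≤ q) (hq2 : q < d - 2) (x : Fin d) :
    branchMixture d q x =
      (if x = (⟨0, by omega⟩ : Fin d) then (1:ℝ) else 0) * (1/2)
      + (if x = (⟨d - q - 1, by omega⟩ : Fin d) then (1:ℝ) else 0) * (1/2) := by
  by_cases h0 : (x : ℕ) = 0 <;> by_cases h1 : (x : ℕ) = d - q - 1 <;>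
    simp [branchMixture, Fin.ext_iff, h0, h1] <;> first | omega | norm_num

lemma step_branch (d q : ℕ) (hq1 : 1 ≤ q) (hq2 : q < d - 2)
    (p p' : Fin d → ℝ) (z : Fin 2)
    (hp : p = branchMixture d q)
    (hpos : 0 < ∑ x, p x * twoCycleC d x z)
    (hrec : ∀ x', p' x' = (∑ x, p x * twoCycleC d x z * twoCycleA d q x x') /
      ∑ x, p x * twoCycleC d x z) :
    p' = pointMass d ⟨1, by omega⟩ ∨ p' = pointMass d ⟨d - q, by omega⟩ := by
  subst hp
  set i0 : Fin d := ⟨0, by omega⟩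
  set i1 : Fin d := ⟨d - q - 1, by omega⟩
  have hden : ∑ x, branchMixture d q x * twoCycleC d x z
      = twoCycleC d i0 z * (1/2) + twoCycleC d i1 z * (1/2) := by
    rw [Finset.sum_congr rfl (fun x _ => by rw [bm_expand d q hq1 hq2 x])]
    simp [add_mul, ite_mul, Finset.sum_add_distrib]
    ring
  have hnum : ∀ x', ∑ x, branchMixture d q x * twoCycleC d x z * twoCycleA d q x x'
      = twoCycleC d i0 z * (1/2) * twoCycleA d q i0 x'
        + twoCycleC d i1 z * (1/2) * twoCycleA d q i1 x' := by
    intro x'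
    rw [Finset.sum_congr rfl (fun x _ => by rw [bm_expand d q hq1 hq2 x])]
    simp [add_mul, ite_mul, Finset.sum_add_distrib]
    ring
  have hC0 : twoCycleC d i0 z = if z = 1 then 1 else 0 := by
    simp [twoCycleC, i0]
  have hC1 : twoCycleC d i1 z = if z = 0 then 1 else 0 := by
    have h1 : (d - q - 1 : ℕ) ≠ 0 := by omega
    have h2 : (d - q - 1 : ℕ) ≠ d - 1 := by omega
    simp [twoCycleC, i1, h1, h2]
  fin_cases z
  · right
    funext x'
    rw [hrec x', hden, hnum x', hC0, hC1]
    norm_num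
    have hni1 : (i1 : ℕ) ≠ d - 1 := by simp [i1]; omega
    simp [twoCycleA, hni1, pointMass, Fin.ext_iff]
    have : (i1 : ℕ) + 1 = d - q := by simp [i1]; omega
    rw [this]
  · left
    funext x'
    rw [hrec x', hden, hnum x', hC0, hC1]
    norm_num
    have hni0 : (i0 : ℕ) ≠ d - 1 := by simp [i0]; omega
    simp [twoCycleA, hni0, pointMass, Fin.ext_iff, i0]

lemma bm_ne_pm (d q : ℕ) (hq1 : 1 ≤ q) (hq2 : q < d - 2) (x : Fin d) :
    branchMixture d q ≠ pointMass d x := by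
  intro h
  have := congrFun h x
  simp [pointMass, branchMixture] at this
  split_ifs at this <;> norm_num at this

/-- for the two-cycle HMM, the nonlinear filter initialized at a
point mass is at every time either a point mass or the mixture
`(1/2)(δ_1 + δ_{d-q})`, and the mixture occurs exactly at the time steps
immediately following a visit to state `d`. -/
theorem two_cycle_filter_structure (d q : ℕ) (hq1 : 1 ≤ q) (hq2 : q < d - 2)
    (π : ℕ → Fin d → ℝ) (z : ℕ → Fin 2)
    (hinit : ∃ x0 : Fin d, π 0 = pointMass d x0)
    (hfilter : ∀ t,
      (0 < ∑ x, π t x * twoCycleC d x (z (t + 1))) ∧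
      ∀ x', π (t + 1) x' =
        (∑ x, π t x * twoCycleC d x (z (t + 1)) * twoCycleA d q x x') /
          ∑ x, π t x * twoCycleC d x (z (t + 1))) :
    (∀ t, (∃ x, π t = pointMass d x) ∨ π t = branchMixture d q) ∧
    (∀ t, π (t + 1) = branchMixture d q ↔
      π t = pointMass d ⟨d - 1, by omega⟩) := by
  have key : ∀ t, (∃ x, π t = pointMass d x) ∨ π t = branchMixture d q := by
    intro t
    induction t with
    | zero => exact Or.inl hinit
    | succ n ih =>
      obtain ⟨hpos, hrec⟩ := hfilter n
      rcases ih with ⟨x0, hx0⟩ | hbm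
      · by_cases hc : (x0 : ℕ) = d - 1
        · exact Or.inr (step_point_end d q hq1 hq2 _ _ _ x0 hc hx0 hpos hrec)
        · exact Or.inl ⟨_, step_point_mid d q hq1 hq2 _ _ _ x0 hc hx0 hpos hrec⟩
      · rcases step_branch d q hq1 hq2 _ _ _ hbm hpos hrec with h | h
        · exact Or.inl ⟨_, h⟩
        · exact Or.inl ⟨_, h⟩
  refine ⟨key, fun t => ⟨fun h => ?_, fun h => ?_⟩⟩
  · obtain ⟨hpos, hrec⟩ := hfilter t
    rcases key t with ⟨x0, hx0⟩ | hbm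
    · by_cases hc : (x0 : ℕ) = d - 1
      · have hx : x0 = (⟨d - 1, by omega⟩ : Fin d) := Fin.ext hc
        rw [hx0, hx]
      · have := step_point_mid d q hq1 hq2 _ _ _ x0 hc hx0 hpos hrec
        rw [this] at h
        exact absurd h.symm (bm_ne_pm d q hq1 hq2 _)
    · rcases step_branch d q hq1 hq2 _ _ _ hbm hpos hrec with h' | h' <;>
        · rw [h'] at h
          exact absurd h.symm (bm_ne_pm d q hq1 hq2 _)
  · obtain ⟨hpos, hrec⟩ := hfilter t
    exact step_point_end d q hq1 hq2 _ _ _ _ rfl h hpos hrec
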